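/- Let G be a connected simple graph of order n with diam(G) = 2 and β(G) = n − 3, with twin graph G*, and let v be a vertex of G such that Γ_2^*(v^*) ≠ ∅ and Γ_1(v) is homogeneous. If Γ_2(v) is homogeneous and |Γ_2^*(v^*)| = 3, then there is exactly one vertex a* ∈ Γ_2^*(v^*) such that a* is adjacent (in G*) to all vertices of R_1^*(v^*). -/

import Mathlib

namespace PaperMetricDim

open SimpleGraph

variable {V : Type*}

/-- A set `W` of vertices resolves the graph `G`: any two distinct vertices have
different distance to some vertex of `W`. -/
def Resolves (G : SimpleGraph V) (W : Set V) : Prop :=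
  ∀ u v : V, u ≠ v → ∃ w ∈ W, G.dist u w ≠ G.dist v w

/-- The metric dimension of `G`: the minimum cardinality of a resolving set. -/
noncomputable def metricDim (G : SimpleGraph V) : ℕ :=
  sInf {k : ℕ | ∃ W : Set V, Resolves G W ∧ W.ncard = k}

/-- `G` is connected and has diameter exactly `d`. -/
def diamEq (G : SimpleGraph V) (d : ℕ) : Prop :=
  G.Connected ∧ (∀ u v : V, G.dist u v ≤ d) ∧ ∃ u v : V, G.dist u v = d

/-- A set of vertices is homogeneous if it induces a complete or an empty subgraph. -/
def Homogeneous (G : SimpleGraph V) (S : Set V) : Prop :=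
  (∀ a ∈ S, ∀ b ∈ S, a ≠ b → G.Adj a b) ∨ (∀ a ∈ S, ∀ b ∈ S, ¬ G.Adj a b)

/-- Two distinct vertices are twins: they have the same neighbours apart from
each other. -/
def Twins (G : SimpleGraph V) (u v : V) : Prop :=
  u ≠ v ∧ G.neighborSet u \ {v} = G.neighborSet v \ {u}

/-- The twin equivalence relation: equal or twins. -/
def twinRel (G : SimpleGraph V) (u v : V) : Prop := u = v ∨ Twins G u v

/-- The twin class of a vertex. -/
def twinClass (G : SimpleGraph V) (v : V) : Set V := {u : V | twinRel G v u}

/-- The vertices of the twin graph: twin equivalence classes. -/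
def TwinVertex (G : SimpleGraph V) : Type _ := {S : Set V // ∃ v : V, S = twinClass G v}

/-- The twin graph `G*` of `G`: twin classes, two distinct classes being
adjacent iff (some, equivalently all) representatives are adjacent in `G`. -/
def twinGraph (G : SimpleGraph V) : SimpleGraph (TwinVertex G) where
  Adj A B := A ≠ B ∧ ∃ a ∈ A.1, ∃ b ∈ B.1, G.Adj a b
  symm := by
    constructor
    rintro A B ⟨hne, a, ha, b, hb, hab⟩
    exact ⟨hne.symm, b, hb, a, ha, hab.symm⟩
  loopless := by constructor; rintro A ⟨hne, -⟩; exact hne rfl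

/-- The twin class of `v`, as a vertex of the twin graph. -/
def cls (G : SimpleGraph V) (v : V) : TwinVertex G := ⟨twinClass G v, v, rfl⟩

/-- A twin-graph vertex of type (1): a singleton class. -/
def typeOne (G : SimpleGraph V) (A : TwinVertex G) : Prop := ∃ v : V, A.1 = {v}

/-- A twin-graph vertex of type (K): a class with at least two vertices inducing
a complete subgraph. -/
def typeK (G : SimpleGraph V) (A : TwinVertex G) : Prop :=
  A.1.Nontrivial ∧ ∀ a ∈ A.1, ∀ b ∈ A.1, a ≠ b → G.Adj a b

/-- A twin-graph vertex of type (N): a class with at least two vertices inducing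
an empty subgraph. -/
def typeN (G : SimpleGraph V) (A : TwinVertex G) : Prop :=
  A.1.Nontrivial ∧ ∀ a ∈ A.1, ∀ b ∈ A.1, ¬ G.Adj a b

/-- Type (1K): type (1) or type (K). -/
def type1K (G : SimpleGraph V) (A : TwinVertex G) : Prop := typeOne G A ∨ typeK G A

/-- Type (1N): type (1) or type (N). -/
def type1N (G : SimpleGraph V) (A : TwinVertex G) : Prop := typeOne G A ∨ typeN G A

/-- Type (KN): type (K) or type (N). -/
def typeKN (G : SimpleGraph V) (A : TwinVertex G) : Prop := typeK G A ∨ typeN G A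

/-- `Γ_i(v)`: the set of vertices at distance `i` from `v`. -/
def Gamma (G : SimpleGraph V) (i : ℕ) (v : V) : Set V := {u : V | G.dist u v = i}

/-- `Γ_i^*(v^*)`: the set of twin-graph vertices at distance `i` from `v^*`. -/
def GammaStar (G : SimpleGraph V) (i : ℕ) (v : V) : Set (TwinVertex G) :=
  {A : TwinVertex G | (twinGraph G).dist A (cls G v) = i}

/-- `R_1(v)`: neighbours of `v` having a neighbour at distance 2 from `v`. -/
def R1 (G : SimpleGraph V) (v : V) : Set V :=
  {x ∈ Gamma G 1 v | ∃ y ∈ Gamma G 2 v, G.Adj x y}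

/-- `R_2(v) = Γ_1(v) \ R_1(v)`. -/
def R2 (G : SimpleGraph V) (v : V) : Set V := Gamma G 1 v \ R1 G v

/-- `R_1^*(v^*)`: twin-graph neighbours of `v^*` having a neighbour in `Γ_2^*(v^*)`. -/
def R1Star (G : SimpleGraph V) (v : V) : Set (TwinVertex G) :=
  {A ∈ GammaStar G 1 v | ∃ B ∈ GammaStar G 2 v, (twinGraph G).Adj A B}

/-- `R_2^*(v^*) = Γ_1^*(v^*) \ R_1^*(v^*)`. -/
def R2Star (G : SimpleGraph V) (v : V) : Set (TwinVertex G) :=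
  GammaStar G 1 v \ R1Star G v

/-- `M_1(x) = Γ_1(v) ∩ Γ_1(x)` (for `x ∈ Γ_1(v)`). -/
def M1 (G : SimpleGraph V) (v x : V) : Set V := Gamma G 1 v ∩ Gamma G 1 x

/-- `M_2(x) = Γ_1(v) ∩ Γ_2(x)` (for `x ∈ Γ_1(v)`). -/
def M2 (G : SimpleGraph V) (v x : V) : Set V := Gamma G 1 v ∩ Gamma G 2 x

/-- Structure `G_1`: the twin graph is `K_3` and has at most one vertex of type (1K). -/
def structG1 (G : SimpleGraph V) : Prop :=
  ∃ a b c : TwinVertex G, a ≠ b ∧ a ≠ c ∧ b ≠ c ∧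
    (∀ X : TwinVertex G, X = a ∨ X = b ∨ X = c) ∧
    (twinGraph G).Adj a b ∧ (twinGraph G).Adj a c ∧ (twinGraph G).Adj b c ∧
    (∀ X Y : TwinVertex G, type1K G X → type1K G Y → X = Y)

/-- Structure `G_2`: the twin graph is the path `P_3` with (a) centre of type (N)
and some leaf of type (K), or (b) one leaf of type (K) and the other of type (KN). -/
def structG2 (G : SimpleGraph V) : Prop :=
  ∃ a b c : TwinVertex G, a ≠ b ∧ a ≠ c ∧ b ≠ c ∧
    (∀ X : TwinVertex G, X = a ∨ X = b ∨ X = c) ∧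
    (twinGraph G).Adj a b ∧ (twinGraph G).Adj b c ∧ ¬ (twinGraph G).Adj a c ∧
    ((typeN G b ∧ (typeK G a ∨ typeK G c)) ∨
     (typeK G a ∧ typeKN G c) ∨ (typeK G c ∧ typeKN G a))

/-- Structure `G_3`: the twin graph is the paw, the triangle being `u, p, q` with
the pendant vertex `l` attached to `u`; `p` is of type (N), `q` of type (1K),
`l` of type (1N); and if `q` is of type (K) then neither `l` nor `u` is of type (N). -/
def structG3 (G : SimpleGraph V) : Prop :=
  ∃ u p q l : TwinVertex G,
    u ≠ p ∧ u ≠ q ∧ u ≠ l ∧ p ≠ q ∧ p ≠ l ∧ q ≠ l ∧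
    (∀ X : TwinVertex G, X = u ∨ X = p ∨ X = q ∨ X = l) ∧
    (twinGraph G).Adj u p ∧ (twinGraph G).Adj u q ∧ (twinGraph G).Adj p q ∧
    (twinGraph G).Adj u l ∧ ¬ (twinGraph G).Adj p l ∧ ¬ (twinGraph G).Adj q l ∧
    typeN G p ∧ type1K G q ∧ type1N G l ∧
    (typeK G q → ¬ typeN G l ∧ ¬ typeN G u)

/-- Structure `G_4`: the twin graph is the cycle `C_5` and every vertex is of type (1). -/
def structG4 (G : SimpleGraph V) : Prop :=
  ∃ v0 v1 v2 v3 v4 : TwinVertex G,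
    v0 ≠ v1 ∧ v0 ≠ v2 ∧ v0 ≠ v3 ∧ v0 ≠ v4 ∧ v1 ≠ v2 ∧ v1 ≠ v3 ∧ v1 ≠ v4 ∧
    v2 ≠ v3 ∧ v2 ≠ v4 ∧ v3 ≠ v4 ∧
    (∀ X : TwinVertex G, X = v0 ∨ X = v1 ∨ X = v2 ∨ X = v3 ∨ X = v4) ∧
    (twinGraph G).Adj v0 v1 ∧ (twinGraph G).Adj v1 v2 ∧ (twinGraph G).Adj v2 v3 ∧
    (twinGraph G).Adj v3 v4 ∧ (twinGraph G).Adj v4 v0 ∧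
    ¬ (twinGraph G).Adj v0 v2 ∧ ¬ (twinGraph G).Adj v1 v3 ∧ ¬ (twinGraph G).Adj v2 v4 ∧
    ¬ (twinGraph G).Adj v3 v0 ∧ ¬ (twinGraph G).Adj v4 v1 ∧
    (∀ X : TwinVertex G, typeOne G X)

/-- Structure `G_5`: the twin graph is `C_5` with one chord (cycle `v0 v1 v2 v3 v4`,
chord `v0 v2`); the two adjacent degree-2 vertices `v3, v4` are of type (1), the
other vertices of type (1K). -/
def structG5 (G : SimpleGraph V) : Prop :=
  ∃ v0 v1 v2 v3 v4 : TwinVertex G,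
    v0 ≠ v1 ∧ v0 ≠ v2 ∧ v0 ≠ v3 ∧ v0 ≠ v4 ∧ v1 ≠ v2 ∧ v1 ≠ v3 ∧ v1 ≠ v4 ∧
    v2 ≠ v3 ∧ v2 ≠ v4 ∧ v3 ≠ v4 ∧
    (∀ X : TwinVertex G, X = v0 ∨ X = v1 ∨ X = v2 ∨ X = v3 ∨ X = v4) ∧
    (twinGraph G).Adj v0 v1 ∧ (twinGraph G).Adj v1 v2 ∧ (twinGraph G).Adj v2 v3 ∧
    (twinGraph G).Adj v3 v4 ∧ (twinGraph G).Adj v4 v0 ∧ (twinGraph G).Adj v0 v2 ∧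
    ¬ (twinGraph G).Adj v1 v3 ∧ ¬ (twinGraph G).Adj v1 v4 ∧ ¬ (twinGraph G).Adj v2 v4 ∧
    typeOne G v3 ∧ typeOne G v4 ∧ type1K G v0 ∧ type1K G v1 ∧ type1K G v2

/-- Structure `G_6`: the twin graph is `C_5` with two adjacent chords (cycle
`v0 v1 v2 v3 v4`, chords `v0 v2` and `v0 v3`, so `v0` has degree 4); `v0` is of any
type, the other vertices of type (1K); no two non-adjacent vertices are both of
type (K), and no two adjacent vertices have the different types (K) and (N). -/
def structG6 (G : SimpleGraph V) : Prop :=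
  ∃ v0 v1 v2 v3 v4 : TwinVertex G,
    v0 ≠ v1 ∧ v0 ≠ v2 ∧ v0 ≠ v3 ∧ v0 ≠ v4 ∧ v1 ≠ v2 ∧ v1 ≠ v3 ∧ v1 ≠ v4 ∧
    v2 ≠ v3 ∧ v2 ≠ v4 ∧ v3 ≠ v4 ∧
    (∀ X : TwinVertex G, X = v0 ∨ X = v1 ∨ X = v2 ∨ X = v3 ∨ X = v4) ∧
    (twinGraph G).Adj v0 v1 ∧ (twinGraph G).Adj v1 v2 ∧ (twinGraph G).Adj v2 v3 ∧
    (twinGraph G).Adj v3 v4 ∧ (twinGraph G).Adj v4 v0 ∧ (twinGraph G).Adj v0 v2 ∧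
    (twinGraph G).Adj v0 v3 ∧
    ¬ (twinGraph G).Adj v1 v3 ∧ ¬ (twinGraph G).Adj v1 v4 ∧ ¬ (twinGraph G).Adj v2 v4 ∧
    type1K G v1 ∧ type1K G v2 ∧ type1K G v3 ∧ type1K G v4 ∧
    (∀ X Y : TwinVertex G, X ≠ Y → ¬ (twinGraph G).Adj X Y →
      ¬ (typeK G X ∧ typeK G Y)) ∧
    (∀ X Y : TwinVertex G, (twinGraph G).Adj X Y → ¬ (typeK G X ∧ typeN G Y))

/-- Structure `G_7`: the twin graph is the kite (`K_4` minus an edge, vertices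
`a, b` of degree 3 in the kite and `c, d` the non-adjacent pair) with a pendant
vertex `l` attached to the degree-3 vertex `a`; `l` is of type (1), `a` and `b`
are of type (1K), one of `c, d` is of type (K) and the other of type (1). -/
def structG7 (G : SimpleGraph V) : Prop :=
  ∃ a b c d l : TwinVertex G,
    a ≠ b ∧ a ≠ c ∧ a ≠ d ∧ a ≠ l ∧ b ≠ c ∧ b ≠ d ∧ b ≠ l ∧ c ≠ d ∧ c ≠ l ∧ d ≠ l ∧
    (∀ X : TwinVertex G, X = a ∨ X = b ∨ X = c ∨ X = d ∨ X = l) ∧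
    (twinGraph G).Adj a b ∧ (twinGraph G).Adj a c ∧ (twinGraph G).Adj a d ∧
    (twinGraph G).Adj b c ∧ (twinGraph G).Adj b d ∧ (twinGraph G).Adj a l ∧
    ¬ (twinGraph G).Adj c d ∧ ¬ (twinGraph G).Adj b l ∧ ¬ (twinGraph G).Adj c l ∧
    ¬ (twinGraph G).Adj d l ∧
    typeOne G l ∧ type1K G a ∧ type1K G b ∧ typeK G c ∧ typeOne G d

/-- Structure `G_8`: the twin graph is the kite (`K_4` minus an edge, `a, b` of
degree 3 and `c, d` the non-adjacent degree-2 pair); one degree-2 vertex `c` is of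
type (K) and the other `d` of type (1); one degree-3 vertex `a` is of type (N)
and the other `b` of type (1K). -/
def structG8 (G : SimpleGraph V) : Prop :=
  ∃ a b c d : TwinVertex G,
    a ≠ b ∧ a ≠ c ∧ a ≠ d ∧ b ≠ c ∧ b ≠ d ∧ c ≠ d ∧
    (∀ X : TwinVertex G, X = a ∨ X = b ∨ X = c ∨ X = d) ∧
    (twinGraph G).Adj a b ∧ (twinGraph G).Adj a c ∧ (twinGraph G).Adj a d ∧
    (twinGraph G).Adj b c ∧ (twinGraph G).Adj b d ∧ ¬ (twinGraph G).Adj c d ∧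
    typeN G a ∧ type1K G b ∧ typeK G c ∧ typeOne G d

/-- Structure `G_9`: the twin graph is `C_4`, two adjacent vertices of type (K)
and the other two of type (1). -/
def structG9 (G : SimpleGraph V) : Prop :=
  ∃ v0 v1 v2 v3 : TwinVertex G,
    v0 ≠ v1 ∧ v0 ≠ v2 ∧ v0 ≠ v3 ∧ v1 ≠ v2 ∧ v1 ≠ v3 ∧ v2 ≠ v3 ∧
    (∀ X : TwinVertex G, X = v0 ∨ X = v1 ∨ X = v2 ∨ X = v3) ∧
    (twinGraph G).Adj v0 v1 ∧ (twinGraph G).Adj v1 v2 ∧ (twinGraph G).Adj v2 v3 ∧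
    (twinGraph G).Adj v3 v0 ∧ ¬ (twinGraph G).Adj v0 v2 ∧ ¬ (twinGraph G).Adj v1 v3 ∧
    typeK G v0 ∧ typeK G v1 ∧ typeOne G v2 ∧ typeOne G v3

/-- Structure `G_10`: the twin graph is the wheel `C_4 ∨ K_1` (hub `h`, rim
`v0 v1 v2 v3`); two adjacent rim (degree-3) vertices `v0, v1` are of type (K), the
hub is of type (1K), and the other vertices of type (1). -/
def structG10 (G : SimpleGraph V) : Prop :=
  ∃ h v0 v1 v2 v3 : TwinVertex G,
    h ≠ v0 ∧ h ≠ v1 ∧ h ≠ v2 ∧ h ≠ v3 ∧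
    v0 ≠ v1 ∧ v0 ≠ v2 ∧ v0 ≠ v3 ∧ v1 ≠ v2 ∧ v1 ≠ v3 ∧ v2 ≠ v3 ∧
    (∀ X : TwinVertex G, X = h ∨ X = v0 ∨ X = v1 ∨ X = v2 ∨ X = v3) ∧
    (twinGraph G).Adj h v0 ∧ (twinGraph G).Adj h v1 ∧ (twinGraph G).Adj h v2 ∧
    (twinGraph G).Adj h v3 ∧
    (twinGraph G).Adj v0 v1 ∧ (twinGraph G).Adj v1 v2 ∧ (twinGraph G).Adj v2 v3 ∧
    (twinGraph G).Adj v3 v0 ∧ ¬ (twinGraph G).Adj v0 v2 ∧ ¬ (twinGraph G).Adj v1 v3 ∧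
    typeK G v0 ∧ typeK G v1 ∧ type1K G h ∧ typeOne G v2 ∧ typeOne G v3

/-! ### Auxiliary lemmas -/

section Aux

variable {G : SimpleGraph V}

lemma twins_symm {u v : V} (h : Twins G u v) : Twins G v u :=
  ⟨h.1.symm, h.2.symm⟩

lemma twinRel_refl (G : SimpleGraph V) (u : V) : twinRel G u u := Or.inl rfl

lemma twinRel_symm {u v : V} (h : twinRel G u v) : twinRel G v u := by
  rcases h with rfl | h
  · exact Or.inl rfl
  · exact Or.inr (twins_symm h)

lemma twins_adj {u v q : V} (h : Twins G u v) (hadj : G.Adj u q) (hq : q ≠ v) :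
    G.Adj v q := by
  have hmem : q ∈ G.neighborSet u \ {v} := ⟨hadj, hq⟩
  rw [h.2] at hmem
  exact hmem.1

lemma twinRel_adj {u v q : V} (h : twinRel G u v) (hadj : G.Adj u q) (hq : q ≠ v) :
    G.Adj v q := by
  rcases h with rfl | h
  · exact hadj
  · exact twins_adj h hadj hq

/-- If `x, y` are twins and `y, z` are twins and `x ~ y`, then `y ~ z`. -/
lemma adj_right_of_twins {x y z : V} (hxy : Twins G x y) (hyz : Twins G y z)
    (hadj : G.Adj x y) : G.Adj y z := by
  by_contra hnadj
  -- then the neighborhoods of y and z coincide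
  have hxz : G.Adj z x := by
    have hx : x ∈ G.neighborSet y \ {z} :=
      ⟨hadj.symm, fun h => hnadj (h ▸ hadj).symm⟩
    rw [hyz.2] at hx
    exact hx.1
  have : z ∈ G.neighborSet x \ {y} := ⟨hxz.symm, hyz.1.symm⟩
  rw [hxy.2] at this
  exact hnadj this.1

lemma twins_sub {u v w : V} (h1 : Twins G u v) (h2 : Twins G v w) (huw : u ≠ w) :
    G.neighborSet u \ {w} ⊆ G.neighborSet w \ {u} := by
  rintro q ⟨hq, hqw⟩
  have hqu : q ≠ u := fun h => G.loopless.irrefl u (h ▸ hq)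
  by_cases hqv : q = v
  · subst hqv
    have hvw : G.Adj q w := adj_right_of_twins h1 h2 hq
    exact ⟨hvw.symm, h1.1.symm⟩
  · have h3 : q ∈ G.neighborSet v \ {u} := by
      rw [← h1.2]; exact ⟨hq, hqv⟩
    have h4 : q ∈ G.neighborSet w \ {v} := by
      rw [← h2.2]; exact ⟨h3.1, hqw⟩
    exact ⟨h4.1, hqu⟩

lemma twinRel_trans {u v w : V} (h1 : twinRel G u v) (h2 : twinRel G v w) :
    twinRel G u w := by
  rcases h1 with rfl | h1
  · exact h2
  rcases h2 with rfl | h2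
  · exact Or.inr h1
  by_cases huw : u = w
  · exact Or.inl huw
  exact Or.inr ⟨huw, Set.Subset.antisymm (twins_sub h1 h2 huw)
    (twins_sub (twins_symm h2) (twins_symm h1) (Ne.symm huw))⟩

lemma twinClass_eq {u w : V} (h : twinRel G u w) : twinClass G u = twinClass G w := by
  ext x
  exact ⟨fun hx => twinRel_trans (twinRel_symm h) hx, fun hx => twinRel_trans h hx⟩

lemma mem_twinClass_self (G : SimpleGraph V) (v : V) : v ∈ twinClass G v := Or.inl rfl

lemma rep_mem (A : TwinVertex G) : ∃ p, p ∈ A.1 := by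
  obtain ⟨w, hw⟩ := A.2
  exact ⟨w, hw ▸ mem_twinClass_self G w⟩

lemma class_eq_twinClass_of_mem {A : TwinVertex G} {p : V} (hp : p ∈ A.1) :
    A.1 = twinClass G p := by
  obtain ⟨w, hw⟩ := A.2
  rw [hw]
  have h2 : p ∈ twinClass G w := by rw [← hw]; exact hp
  exact twinClass_eq h2

lemma class_eq_of_mem {A B : TwinVertex G} {p : V} (hA : p ∈ A.1) (hB : p ∈ B.1) :
    A = B := by
  apply Subtype.ext
  rw [class_eq_twinClass_of_mem hA, class_eq_twinClass_of_mem hB]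

lemma rel_of_mem_mem {A : TwinVertex G} {p q : V} (hp : p ∈ A.1) (hq : q ∈ A.1) :
    twinRel G p q := by
  have h := class_eq_twinClass_of_mem hp
  rw [h] at hq
  exact hq

lemma twinGraph_adj {A B : TwinVertex G} :
    (twinGraph G).Adj A B ↔ A ≠ B ∧ ∃ a ∈ A.1, ∃ b ∈ B.1, G.Adj a b := Iff.rfl

/-- Every member of a twin class at twin-graph distance 2 from `v*` is at
distance 2 from `v` in `G`. -/
lemma dist_two_of_gammaStar2 (hdiam : diamEq G 2) {v : V} {A : TwinVertex G}
    (hA : A ∈ GammaStar G 2 v) {p : V} (hp : p ∈ A.1) :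
    ¬ G.Adj p v ∧ G.dist p v = 2 := by
  have hA2 : (twinGraph G).dist A (cls G v) = 2 := hA
  have hAne : A ≠ cls G v := by
    rintro rfl
    rw [SimpleGraph.dist_self] at hA2
    omega
  have hmemv : v ∈ (cls G v).1 := mem_twinClass_self G v
  have hpv : p ≠ v := by
    rintro rfl
    exact hAne (class_eq_of_mem hp hmemv)
  have hnadj : ¬ G.Adj p v := by
    intro hadj
    have hadjA : (twinGraph G).Adj A (cls G v) := ⟨hAne, p, hp, v, hmemv, hadj⟩
    have := SimpleGraph.dist_eq_one_iff_adj.mpr hadjA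
    omega
  refine ⟨hnadj, ?_⟩
  have hle : G.dist p v ≤ 2 := hdiam.2.1 p v
  have h0 : G.dist p v ≠ 0 := fun h0 => hpv ((hdiam.1.dist_eq_zero_iff).mp h0)
  have h1 : G.dist p v ≠ 1 := fun h1 => hnadj (SimpleGraph.dist_eq_one_iff_adj.mp h1)
  omega

/-- From `β(G) = n - 3` : any 4 distinct vertices contain two with the same
adjacencies outside the 4-set. -/
lemma exists_pair {V : Type*} [Fintype V] (G : SimpleGraph V)
    (hconn : G.Connected) (hbeta : metricDim G = Fintype.card V - 3)
    (a b c v : V)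
    (hab : a ≠ b) (hac : a ≠ c) (hav : a ≠ v) (hbc : b ≠ c) (hbv : b ≠ v)
    (hcv : c ≠ v) :
    ∃ u w : V, u ≠ w ∧ (u = a ∨ u = b ∨ u = c ∨ u = v) ∧
      (w = a ∨ w = b ∨ w = c ∨ w = v) ∧
      ∀ x, x ≠ a → x ≠ b → x ≠ c → x ≠ v → (G.Adj u x ↔ G.Adj w x) := by
  classical
  set S : Finset V := {a, b, c, v} with hS
  have hScard : S.card = 4 := by
    rw [hS, Finset.card_insert_of_notMem (by simp [hab, hac, hav]),
      Finset.card_insert_of_notMem (by simp [hbc, hbv]),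
      Finset.card_insert_of_notMem (by simp [hcv]), Finset.card_singleton]
  have hcard4 : 4 ≤ Fintype.card V := by
    have h := Finset.card_le_univ S
    rw [hScard] at h
    exact h
  set W : Set V := ↑(Finset.univ \ S) with hWdef
  have hW : W.ncard = Fintype.card V - 4 := by
    rw [hWdef, Set.ncard_coe_finset, Finset.card_sdiff_of_subset (Finset.subset_univ S),
      Finset.card_univ, hScard]
  have hmemW : ∀ t : V, t ≠ a → t ≠ b → t ≠ c → t ≠ v → t ∈ W := by
    intro t h1 h2 h3 h4
    simp [hWdef, hS, h1, h2, h3, h4]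
  have hnres : ¬ Resolves G W := by
    intro hres
    have h1 : metricDim G ≤ Fintype.card V - 4 := Nat.sInf_le ⟨W, hres, hW⟩
    omega
  unfold Resolves at hnres
  push_neg at hnres
  obtain ⟨u, w, hne, heq⟩ := hnres
  have hmem : ∀ t : V, (∀ x ∈ W, G.dist t x = G.dist w x ∨ G.dist u x = G.dist t x) →
      True := fun _ _ => trivial
  have hu : u = a ∨ u = b ∨ u = c ∨ u = v := by
    by_contra h
    push_neg at h
    obtain ⟨h1, h2, h3, h4⟩ := h
    have h5 := heq u (hmemW u h1 h2 h3 h4)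
    rw [SimpleGraph.dist_self] at h5
    exact hne (((hconn.dist_eq_zero_iff).mp h5.symm).symm)
  have hw : w = a ∨ w = b ∨ w = c ∨ w = v := by
    by_contra h
    push_neg at h
    obtain ⟨h1, h2, h3, h4⟩ := h
    have h5 := heq w (hmemW w h1 h2 h3 h4)
    rw [SimpleGraph.dist_self] at h5
    exact hne ((hconn.dist_eq_zero_iff).mp h5)
  refine ⟨u, w, hne, hu, hw, ?_⟩
  intro x h1 h2 h3 h4
  have h5 := heq x (hmemW x h1 h2 h3 h4)
  constructor
  · intro h
    apply SimpleGraph.dist_eq_one_iff_adj.mp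
    rw [← h5]
    exact SimpleGraph.dist_eq_one_iff_adj.mpr h
  · intro h
    apply SimpleGraph.dist_eq_one_iff_adj.mp
    rw [h5]
    exact SimpleGraph.dist_eq_one_iff_adj.mpr h

/-- If two of the three (distance-2) vertices have the same adjacencies outside
`{a,b,c,v}`, they are twins (using homogeneity of `Γ₂(v)`). -/
lemma twins_of_pair {v a b c u w : V}
    (ha : G.dist a v = 2) (hb : G.dist b v = 2) (hc : G.dist c v = 2)
    (hu : u = a ∨ u = b ∨ u = c) (hw : w = a ∨ w = b ∨ w = c) (huw : u ≠ w)
    (hhom2 : Homogeneous G (Gamma G 2 v))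
    (hiff : ∀ x, x ≠ a → x ≠ b → x ≠ c → x ≠ v → (G.Adj u x ↔ G.Adj w x)) :
    Twins G u w := by
  have hmem2 : ∀ z : V, (z = a ∨ z = b ∨ z = c) → z ∈ Gamma G 2 v := by
    rintro z (rfl | rfl | rfl) <;> assumption
  have hdu : G.dist u v = 2 := hmem2 u hu
  have hdw : G.dist w v = 2 := hmem2 w hw
  have hnuv : ¬ G.Adj u v := by
    intro h
    have := SimpleGraph.dist_eq_one_iff_adj.mpr h
    omega
  have hnwv : ¬ G.Adj w v := by
    intro h
    have := SimpleGraph.dist_eq_one_iff_adj.mpr h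
    omega
  refine ⟨huw, ?_⟩
  ext x
  simp only [Set.mem_diff, SimpleGraph.mem_neighborSet, Set.mem_singleton_iff]
  by_cases hxv : x = v
  · subst hxv
    constructor
    · rintro ⟨h, -⟩; exact absurd h hnuv
    · rintro ⟨h, -⟩; exact absurd h hnwv
  by_cases hxu : x = u
  · subst hxu
    constructor
    · rintro ⟨h, -⟩; exact absurd h (G.loopless.irrefl x)
    · rintro ⟨-, h⟩; exact absurd rfl h
  by_cases hxw : x = w
  · subst hxw
    constructor
    · rintro ⟨-, h⟩; exact absurd rfl h
    · rintro ⟨h, -⟩; exact absurd h (G.loopless.irrefl x)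
  by_cases hxabc : x = a ∨ x = b ∨ x = c
  · have hx2 : x ∈ Gamma G 2 v := hmem2 x hxabc
    rcases hhom2 with hK | hE
    · constructor
      · rintro ⟨-, -⟩
        exact ⟨hK w (hmem2 w hw) x hx2 (Ne.symm hxw), hxu⟩
      · rintro ⟨-, -⟩
        exact ⟨hK u (hmem2 u hu) x hx2 (Ne.symm hxu), hxw⟩
    · constructor
      · rintro ⟨h, -⟩
        exact absurd h (hE u (hmem2 u hu) x hx2)
      · rintro ⟨h, -⟩
        exact absurd h (hE w (hmem2 w hw) x hx2)
  · push_neg at hxabc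
    obtain ⟨h1, h2, h3⟩ := hxabc
    have hxiff := hiff x h1 h2 h3 hxv
    constructor
    · rintro ⟨h, -⟩
      exact ⟨hxiff.mp h, hxu⟩
    · rintro ⟨h, -⟩
      exact ⟨hxiff.mpr h, hxw⟩

/-- If a distance-2 vertex has the same adjacencies as `v` outside `{a,b,c,v}`,
then it is adjacent to all neighbours of `v`. -/
lemma adj_all_of_pair {v a b c y : V}
    (ha : G.dist a v = 2) (hb : G.dist b v = 2) (hc : G.dist c v = 2)
    (hy : y = a ∨ y = b ∨ y = c)
    (hiff : ∀ x, x ≠ a → x ≠ b → x ≠ c → x ≠ v → (G.Adj y x ↔ G.Adj v x)) :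
    ∀ x, G.Adj v x → G.Adj y x := by
  intro x hvx
  have hd1 : G.dist x v = 1 := SimpleGraph.dist_eq_one_iff_adj.mpr hvx.symm
  have h1 : x ≠ a := by rintro rfl; omega
  have h2 : x ≠ b := by rintro rfl; omega
  have h3 : x ≠ c := by rintro rfl; omega
  have h4 : x ≠ v := hvx.ne'
  exact (hiff x h1 h2 h3 h4).mpr hvx

end Aux

/-- If `G` is connected of order `n`, `diam(G) = 2`, `β(G) = n - 3`, `v` is a
vertex with `Γ_2^*(v^*) ≠ ∅` and `Γ_1(v)` homogeneous, `Γ_2(v)` is homogeneous,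
and `|Γ_2^*(v^*)| = 3`, then there is exactly one vertex of `Γ_2^*(v^*)` adjacent
in the twin graph to all vertices of `R_1^*(v^*)`. -/
theorem unique_vertex_adjacent_to_all_R1Star
    {V : Type*} [Fintype V] (G : SimpleGraph V)
    (hdiam : diamEq G 2)
    (hbeta : metricDim G = Fintype.card V - 3)
    (v : V) (h2 : (GammaStar G 2 v).Nonempty)
    (hhom : Homogeneous G (Gamma G 1 v))
    (hhom2 : Homogeneous G (Gamma G 2 v))
    (h3 : (GammaStar G 2 v).ncard = 3) :
    ∃! A : TwinVertex G, A ∈ GammaStar G 2 v ∧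
      ∀ B ∈ R1Star G v, (twinGraph G).Adj A B := by
  classical
  have hconn := hdiam.1
  have hdle := hdiam.2.1
  -- extract the three twin classes at distance 2 and representatives
  obtain ⟨P1, P2, P3, h12, h13, h23, hset⟩ := Set.ncard_eq_three.mp h3
  have hP1 : P1 ∈ GammaStar G 2 v := by rw [hset]; simp
  have hP2 : P2 ∈ GammaStar G 2 v := by rw [hset]; simp
  have hP3 : P3 ∈ GammaStar G 2 v := by rw [hset]; simp
  obtain ⟨a, haP⟩ := rep_mem P1
  obtain ⟨b, hbP⟩ := rep_mem P2
  obtain ⟨c, hcP⟩ := rep_mem P3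
  obtain ⟨hana, hda⟩ := dist_two_of_gammaStar2 hdiam hP1 haP
  obtain ⟨hanb, hdb⟩ := dist_two_of_gammaStar2 hdiam hP2 hbP
  obtain ⟨hanc, hdc⟩ := dist_two_of_gammaStar2 hdiam hP3 hcP
  have hab : a ≠ b := by rintro rfl; exact h12 (class_eq_of_mem haP hbP)
  have hac : a ≠ c := by rintro rfl; exact h13 (class_eq_of_mem haP hcP)
  have hbc : b ≠ c := by rintro rfl; exact h23 (class_eq_of_mem hbP hcP)
  have hav : a ≠ v := by
    rintro rfl; rw [SimpleGraph.dist_self] at hda; omega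
  have hbv : b ≠ v := by
    rintro rfl; rw [SimpleGraph.dist_self] at hdb; omega
  have hcv : c ≠ v := by
    rintro rfl; rw [SimpleGraph.dist_self] at hdc; omega
  -- two vertices of {a,b,c,v} look alike outside
  obtain ⟨u, w, hne, hu, hw, hiff⟩ :=
    exists_pair G hconn hbeta a b c v hab hac hav hbc hbv hcv
  -- distinct representatives are never twins
  have hsep : ∀ p q : V, (p = a ∨ p = b ∨ p = c) → (q = a ∨ q = b ∨ q = c) →
      twinRel G p q → p = q := by
    have key : ∀ (A B : TwinVertex G) (p q : V), p ∈ A.1 → q ∈ B.1 →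
        twinRel G p q → A = B := by
      intro A B p q hp hq h
      have : q ∈ A.1 := by
        rw [class_eq_twinClass_of_mem hp]; exact h
      exact class_eq_of_mem this hq
    rintro p q (rfl | rfl | rfl) (rfl | rfl | rfl) h <;>
      first
        | rfl
        | (exact absurd (key _ _ _ _ haP hbP h) h12)
        | (exact absurd (key _ _ _ _ haP hcP h) h13)
        | (exact absurd (key _ _ _ _ hbP hcP h) h23)
        | (exact absurd (key _ _ _ _ hbP haP h) (Ne.symm h12))
        | (exact absurd (key _ _ _ _ hcP haP h) (Ne.symm h13))
        | (exact absurd (key _ _ _ _ hcP hbP h) (Ne.symm h23))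
  -- a vertex among {a,b,c} adjacent to all neighbours of v
  have key : ∃ y : V, (y = a ∨ y = b ∨ y = c) ∧ ∀ x, G.Adj v x → G.Adj y x := by
    by_cases huv : u = v
    · subst huv
      have hw' : w = a ∨ w = b ∨ w = c := by
        rcases hw with rfl | rfl | rfl | rfl
        · exact Or.inl rfl
        · exact Or.inr (Or.inl rfl)
        · exact Or.inr (Or.inr rfl)
        · exact absurd rfl hne
      exact ⟨w, hw', adj_all_of_pair hda hdb hdc hw'
        (fun x h1 h2 h3 h4 => (hiff x h1 h2 h3 h4).symm)⟩
    by_cases hwv : w = v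
    · subst hwv
      have hu' : u = a ∨ u = b ∨ u = c := by
        rcases hu with rfl | rfl | rfl | rfl
        · exact Or.inl rfl
        · exact Or.inr (Or.inl rfl)
        · exact Or.inr (Or.inr rfl)
        · exact absurd rfl hne
      exact ⟨u, hu', adj_all_of_pair hda hdb hdc hu' hiff⟩
    · have hu' : u = a ∨ u = b ∨ u = c := by
        rcases hu with rfl | rfl | rfl | rfl
        · exact Or.inl rfl
        · exact Or.inr (Or.inl rfl)
        · exact Or.inr (Or.inr rfl)
        · exact absurd rfl huv
      have hw' : w = a ∨ w = b ∨ w = c := by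
        rcases hw with rfl | rfl | rfl | rfl
        · exact Or.inl rfl
        · exact Or.inr (Or.inl rfl)
        · exact Or.inr (Or.inr rfl)
        · exact absurd rfl hwv
      have htw : Twins G u w :=
        twins_of_pair hda hdb hdc hu' hw' hne hhom2 hiff
      exact absurd (hsep u w hu' hw' (Or.inr htw)) hne
  obtain ⟨y, hyabc, hyadjN⟩ := key
  -- the class of y
  have hYex : ∃ Y : TwinVertex G, y ∈ Y.1 ∧ Y ∈ GammaStar G 2 v := by
    rcases hyabc with rfl | rfl | rfl
    exacts [⟨P1, haP, hP1⟩, ⟨P2, hbP, hP2⟩, ⟨P3, hcP, hP3⟩]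
  obtain ⟨Y, hyY, hYmem⟩ := hYex
  obtain ⟨hyna, hyd⟩ := dist_two_of_gammaStar2 hdiam hYmem hyY
  refine ⟨Y, ⟨hYmem, ?_⟩, ?_⟩
  · -- Y is adjacent to all classes in R₁*(v*)
    intro B hB
    have hadjB : (twinGraph G).Adj B (cls G v) :=
      SimpleGraph.dist_eq_one_iff_adj.mp hB.1
    obtain ⟨hBne, x, hxB, u', hu', hxu'⟩ := twinGraph_adj.mp hadjB
    have hxnv : x ≠ v := by
      rintro rfl
      exact hBne (class_eq_of_mem hxB (mem_twinClass_self G _))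
    have hxv : G.Adj x v := by
      have hrel : twinRel G v u' := hu'
      rcases hrel with rfl | htw
      · exact hxu'
      · exact (twins_adj (twins_symm htw) hxu'.symm hxnv).symm
    have hyx : G.Adj y x := hyadjN x hxv.symm
    refine twinGraph_adj.mpr ⟨?_, y, hyY, x, hxB, hyx⟩
    rintro rfl
    exact (dist_two_of_gammaStar2 hdiam hYmem hxB).1 hxv
  · -- uniqueness
    intro Z hZ
    obtain ⟨hZmem, hZadj⟩ := hZ
    obtain ⟨z, hzZ⟩ := rep_mem Z
    obtain ⟨hzna, hzd⟩ := dist_two_of_gammaStar2 hdiam hZmem hzZ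
    -- z is adjacent to all neighbours of v
    have hzN : ∀ x, G.Adj v x → G.Adj z x := by
      intro x hvx
      set X : TwinVertex G := cls G x with hXdef
      have hxX : x ∈ X.1 := mem_twinClass_self G x
      have hXne : X ≠ cls G v := by
        intro h
        have hmem : x ∈ (cls G v).1 := by rw [← h]; exact hxX
        have hrel : twinRel G v x := hmem
        rcases hrel with rfl | htw
        · exact G.loopless.irrefl _ hvx
        · have hyx : G.Adj x y := (hyadjN x hvx).symm
          have hynv : y ≠ v := by
            rintro rfl; rw [SimpleGraph.dist_self] at hyd; omega
          have : G.Adj v y := twins_adj (twins_symm htw) hyx hynv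
          have := SimpleGraph.dist_eq_one_iff_adj.mpr this.symm
          omega
      have hXmem1 : X ∈ GammaStar G 1 v := by
        show (twinGraph G).dist X (cls G v) = 1
        exact SimpleGraph.dist_eq_one_iff_adj.mpr
          (twinGraph_adj.mpr ⟨hXne, x, hxX, v, mem_twinClass_self G v, hvx.symm⟩)
      have hXY : X ≠ Y := by
        intro h
        have : x ∈ Y.1 := by rw [← h]; exact hxX
        exact (dist_two_of_gammaStar2 hdiam hYmem this).1 hvx.symm
      have hXR : X ∈ R1Star G v :=
        ⟨hXmem1, Y, hYmem, twinGraph_adj.mpr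
          ⟨hXY, x, hxX, y, hyY, (hyadjN x hvx).symm⟩⟩
      obtain ⟨-, p, hpZ, q, hqX, hpq⟩ := twinGraph_adj.mp (hZadj X hXR)
      have hqz : q ≠ z := by
        rintro rfl
        have hXZ : X = Z := class_eq_of_mem hqX hzZ
        have : x ∈ Z.1 := by rw [← hXZ]; exact hxX
        exact (dist_two_of_gammaStar2 hdiam hZmem this).1 hvx.symm
      have hzq : G.Adj z q := twinRel_adj (rel_of_mem_mem hpZ hzZ) hpq hqz
      have hxz : x ≠ z := by
        rintro rfl
        exact hzna hvx.symm
      exact (twinRel_adj (rel_of_mem_mem hqX hxX) hzq.symm (Ne.symm hxz)).symm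
    -- y and z are twins (or equal)
    have hmain : ∀ p q x : V, G.dist p v = 2 → G.dist q v = 2 →
        (∀ t, G.Adj v t → G.Adj q t) → G.Adj p x → x ≠ q → G.Adj q x := by
      intro p q x hp hq hqN hpx hxq
      have hxv : x ≠ v := by
        rintro rfl
        have := SimpleGraph.dist_eq_one_iff_adj.mpr hpx
        omega
      have hdx : G.dist x v ≤ 2 := hdle x v
      have hd0 : G.dist x v ≠ 0 := fun h0 => hxv ((hconn.dist_eq_zero_iff).mp h0)
      have hcase : G.dist x v = 1 ∨ G.dist x v = 2 := by omega
      rcases hcase with h1 | h2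
      · exact hqN x (SimpleGraph.dist_eq_one_iff_adj.mp h1).symm
      · rcases hhom2 with hK | hE
        · exact (hK x h2 q hq hxq).symm
        · exact absurd hpx (hE p hp x h2)
    have hrel : twinRel G y z := by
      by_cases h : y = z
      · exact Or.inl h
      refine Or.inr ⟨h, ?_⟩
      ext x
      simp only [Set.mem_diff, SimpleGraph.mem_neighborSet, Set.mem_singleton_iff]
      constructor
      · rintro ⟨hpx, hxz⟩
        exact ⟨hmain y z x hyd hzd hzN hpx hxz, hpx.ne'⟩
      · rintro ⟨hpx, hxy⟩
        exact ⟨hmain z y x hzd hyd hyadjN hpx hxy, hpx.ne'⟩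
    apply Subtype.ext
    rw [class_eq_twinClass_of_mem hzZ, class_eq_twinClass_of_mem hyY]
    exact twinClass_eq (twinRel_symm hrel)

end PaperMetricDim
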